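/- Let G be a finite directed graph on n ≥ 1 vertices, and for each vertex i let d_i^out denote its out-degree. Then there exists a subset U of vertices with |U| ≥ n / (1 + (1/n)·∑_i d_i^out) such that the induced directed subgraph of G on U is acyclic. -/

import Mathlib

open Finset

/-- Directed Caro–Wei: in any finset `S`, there is `U ⊆ S` of size at least
`∑_{v∈S} 1/(d_S(v)+1)` inducing an acyclic subgraph. -/
theorem caroWei {V : Type*} [DecidableEq V] (E : V → V → Prop) [DecidableRel E]
    (hirr : ∀ v, ¬ E v v) :
    ∀ S : Finset V, ∃ U : Finset V, U ⊆ S ∧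
      (∑ v ∈ S, (1 : ℚ) / ((S.filter fun j => E v j).card + 1)) ≤ U.card ∧
      ∀ v ∈ U, ∀ w ∈ U, E v w →
        ¬ Relation.ReflTransGen (fun a b => a ∈ U ∧ b ∈ U ∧ E a b) w v := by
  intro S
  induction S using Finset.strongInduction with
  | _ S ih =>
  rcases S.eq_empty_or_nonempty with rfl | hS
  · exact ⟨∅, by simp⟩
  obtain ⟨v, hv, hvmin⟩ := S.exists_min_image (fun u => (S.filter fun j => E u j).card) hS
  set R : Finset V := insert v (S.filter fun j => E v j) with hR
  set T : Finset V := S \ R with hT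
  have hTsub : T ⊆ S := Finset.sdiff_subset
  have hvT : v ∉ T := by simp [hT, hR]
  have hTS : T ⊂ S := Finset.ssubset_iff_of_subset hTsub |>.mpr ⟨v, hv, hvT⟩
  obtain ⟨U', hU'T, hcard, hacyc⟩ := ih T hTS
  have hvU' : v ∉ U' := fun h => hvT (hU'T h)
  have hnoout : ∀ w ∈ U', ¬ E v w := by
    intro w hw hE
    have hwT := hU'T hw
    rw [hT, Finset.mem_sdiff] at hwT
    exact hwT.2 (by simp [hR, hwT.1, hE])
  refine ⟨insert v U', Finset.insert_subset hv (hU'T.trans hTsub), ?_, ?_⟩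
  · -- counting
    have hdvpos : (0 : ℚ) < ((S.filter fun j => E v j).card : ℚ) + 1 := by positivity
    rw [← Finset.sum_sdiff hTsub]
    have h1 : (∑ u ∈ S \ T, (1 : ℚ) / ((S.filter fun j => E u j).card + 1)) ≤ 1 := by
      have hST : S \ T ⊆ S := Finset.sdiff_subset
      calc (∑ u ∈ S \ T, (1 : ℚ) / ((S.filter fun j => E u j).card + 1))
          ≤ ∑ u ∈ S \ T, (1 : ℚ) / ((S.filter fun j => E v j).card + 1) := by
            refine Finset.sum_le_sum fun u hu => ?_
            apply one_div_le_one_div_of_le hdvpos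
            have := hvmin u (hST hu)
            exact_mod_cast Nat.add_le_add_right this 1
        _ = ((S \ T).card : ℚ) / ((S.filter fun j => E v j).card + 1) := by
            rw [Finset.sum_const, div_eq_mul_inv, one_mul, nsmul_eq_mul, div_eq_mul_inv]
        _ ≤ 1 := by
            rw [div_le_one hdvpos]
            have hle : (S \ T).card ≤ (S.filter fun j => E v j).card + 1 := by
              have : S \ T ⊆ R := by
                intro x hx
                rw [hT, Finset.sdiff_sdiff_self_left] at hx
                exact (Finset.mem_inter.mp hx).2
              calc (S \ T).card ≤ R.card := Finset.card_le_card this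
                _ ≤ (S.filter fun j => E v j).card + 1 := by
                    rw [hR]; simpa [add_comm] using Finset.card_insert_le v _
            exact_mod_cast hle
    have h2 : (∑ u ∈ T, (1 : ℚ) / ((S.filter fun j => E u j).card + 1)) ≤ (U'.card : ℚ) := by
      refine le_trans (Finset.sum_le_sum fun u _ => ?_) hcard
      apply one_div_le_one_div_of_le (by positivity)
      have : (T.filter fun j => E u j).card ≤ (S.filter fun j => E u j).card :=
        Finset.card_le_card (Finset.filter_subset_filter _ hTsub)
      exact_mod_cast Nat.add_le_add_right this 1
    rw [Finset.card_insert_of_notMem hvU']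
    push_cast
    linarith
  · -- acyclicity
    intro a ha b hb hE hpath
    set U : Finset V := insert v U' with hU
    have key : ∀ w u, Relation.ReflTransGen (fun a b => a ∈ U ∧ b ∈ U ∧ E a b) w u →
        u ∈ U' → w ∈ U' ∧
          Relation.ReflTransGen (fun a b => a ∈ U' ∧ b ∈ U' ∧ E a b) w u := by
      intro w u h hu
      induction h using Relation.ReflTransGen.head_induction_on with
      | refl => exact ⟨hu, Relation.ReflTransGen.refl⟩
      | head hac hcu ihc =>
        rename_i x c
        obtain ⟨hxU, hcU, hxc⟩ := hac
        obtain ⟨hcU', hpath'⟩ := ihc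
        have hxU' : x ∈ U' := by
          rcases Finset.mem_insert.mp hxU with rfl | h
          · exact absurd hxc (hnoout c hcU')
          · exact h
        exact ⟨hxU', Relation.ReflTransGen.head ⟨hxU', hcU', hxc⟩ hpath'⟩
    rcases Finset.mem_insert.mp ha with rfl | haU'
    · rcases Finset.mem_insert.mp hb with rfl | hbU'
      · exact absurd hE (hirr _)
      · exact hnoout b hbU' hE
    · obtain ⟨hbU', hpath'⟩ := key b a hpath haU'
      exact hacyc a haU' b hbU' hE hpath'

theorem stmt_2 {V : Type*} [Fintype V] [DecidableEq V]
    (E : V → V → Prop) [DecidableRel E]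
    (hirr : ∀ v, ¬ E v v)
    (hn : 1 ≤ Fintype.card V) :
    ∃ U : Finset V,
      (Fintype.card V : ℚ) /
          (1 + (∑ i, ((Finset.univ.filter fun j => E i j).card : ℚ)) / (Fintype.card V : ℚ))
        ≤ (U.card : ℚ) ∧
      ∀ v ∈ U, ∀ w ∈ U, E v w →
        ¬ Relation.ReflTransGen (fun a b => a ∈ U ∧ b ∈ U ∧ E a b) w v := by
  obtain ⟨U, -, hcard, hacyc⟩ := caroWei E hirr Finset.univ
  refine ⟨U, le_trans ?_ hcard, hacyc⟩
  set a : V → ℚ := fun i => ((Finset.univ.filter fun j => E i j).card : ℚ) + 1 with ha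
  have hapos : ∀ i, (0 : ℚ) < a i := fun i => by positivity
  have hnQ : (0 : ℚ) < (Fintype.card V : ℚ) := by exact_mod_cast hn
  have hsum : ∑ i, a i = (∑ i, ((Finset.univ.filter fun j => E i j).card : ℚ)) +
      (Fintype.card V : ℚ) := by
    simp [ha, Finset.sum_add_distrib, Finset.card_univ]
  have hCS : ((Fintype.card V : ℚ)) ^ 2 ≤ (∑ i, a i) * ∑ i, 1 / a i := by
    have := Finset.sum_sq_le_sum_mul_sum_of_sq_eq_mul (Finset.univ : Finset V)
      (r := fun _ => (1 : ℚ)) (f := a) (g := fun i => 1 / a i)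
      (fun i _ => (hapos i).le) (fun i _ => by positivity)
      (fun i _ => by rw [one_pow, mul_one_div, div_self (hapos i).ne'])
    simpa [Finset.card_univ] using this
  have : Nonempty V := Fintype.card_pos_iff.mp hn
  have hsumpos : (0 : ℚ) < ∑ i, a i :=
    Finset.sum_pos (fun i _ => hapos i) Finset.univ_nonempty
  have heq : (Fintype.card V : ℚ) /
      (1 + (∑ i, ((Finset.univ.filter fun j => E i j).card : ℚ)) / (Fintype.card V : ℚ)) =
      ((Fintype.card V : ℚ)) ^ 2 / (∑ i, a i) := by
    rw [hsum, add_comm (1 : ℚ), div_add_one hnQ.ne', div_div_eq_mul_div]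
    ring
  rw [heq, div_le_iff₀ hsumpos]
  calc ((Fintype.card V : ℚ)) ^ 2 ≤ (∑ i, a i) * ∑ i, 1 / a i := hCS
    _ = (∑ i, 1 / a i) * ∑ i, a i := mul_comm _ _
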